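/- arXiv:1005.0211 — 3 statements merged into one kernel-verified Lean document; each statement's English description precedes it below -/
import Mathlib

section
/- Let f : ℝ → ℝ be a convex function, let a < b be real numbers, and let {π_m} be a sequence of partitions of [a,b] with mesh ‖π_m‖ → 0 as m → ∞. Let P_m be the convex linear approximation of f based on π_m. Then for every x ∈ (a,b), P_m(x) → f(x) as m → ∞. -/
/-- Theorem 2.3 (i), first part: if `P m` is the convex linear approximation of the convex
function `f` based on a partition `π_m` of `[a, b]` and the meshes `‖π_m‖` tend to `0`,
then `P m x → f x` for every `x ∈ (a, b)`. -/
theorem convexLinearApprox_tendsto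
    (f : ℝ → ℝ) (hf : ConvexOn ℝ Set.univ f)
    (a b : ℝ) (hab : a < b)
    (N : ℕ → ℕ) (hN : ∀ m, 0 < N m)
    (pts : ℕ → ℕ → ℝ)
    (hpts0 : ∀ m, pts m 0 = a) (hptsN : ∀ m, pts m (N m) = b)
    (hmono : ∀ m, ∀ i < N m, pts m i < pts m (i + 1))
    (hmesh : Filter.Tendsto
      (fun m => ⨆ i : Fin (N m), (pts m ((i : ℕ) + 1) - pts m (i : ℕ)))
      Filter.atTop (nhds 0))
    (P : ℕ → ℝ → ℝ)
    (hPf : ∀ m, ∀ i ≤ N m, P m (pts m i) = f (pts m i))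
    (hPaff : ∀ m, ∀ i < N m, ∃ c d : ℝ,
      ∀ x ∈ Set.Icc (pts m i) (pts m (i + 1)), P m x = c * x + d) :
    ∀ x ∈ Set.Ioo a b,
      Filter.Tendsto (fun m => P m x) Filter.atTop (nhds (f x)) := by
  intro x hx
  obtain ⟨hax, hxb⟩ := hx
  classical
  have hcont : Continuous f := by
    rw [← continuousOn_univ]
    exact hf.continuousOn isOpen_univ
  have hex : ∀ m, ∃ i, i < N m ∧ pts m i ≤ x ∧ x ≤ pts m (i + 1) := by
    intro m
    have hNS : x < pts m (N m) := by rw [hptsN]; exact hxb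
    have hS : ∃ j, x < pts m j := ⟨_, hNS⟩
    have hjx : x < pts m (Nat.find hS) := Nat.find_spec hS
    have hjle : Nat.find hS ≤ N m := Nat.find_le hNS
    have hj0 : Nat.find hS ≠ 0 := by
      intro h
      rw [h, hpts0] at hjx
      exact absurd hjx (not_lt.2 hax.le)
    obtain ⟨k, hk⟩ := Nat.exists_eq_succ_of_ne_zero hj0
    refine ⟨k, by omega, ?_, ?_⟩
    · have := Nat.find_min hS (show k < Nat.find hS by omega)
      exact not_lt.1 this
    · rw [← Nat.succ_eq_add_one, ← hk]; exact hjx.le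
  choose idx hidxlt hle1 hle2 using hex
  set u := fun m => pts m (idx m) with hu_def
  set v := fun m => pts m (idx m + 1) with hv_def
  have huv : ∀ m, u m < v m := fun m => hmono m _ (hidxlt m)
  have hmb : ∀ m, v m - u m ≤ ⨆ i : Fin (N m), (pts m ((i : ℕ) + 1) - pts m (i : ℕ)) := by
    intro m
    exact le_ciSup (f := fun i : Fin (N m) => pts m ((i : ℕ) + 1) - pts m (i : ℕ))
      (Set.Finite.bddAbove (Set.finite_range _)) (⟨idx m, hidxlt m⟩ : Fin (N m))
  have hu : Filter.Tendsto u Filter.atTop (nhds x) := by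
    have h0 : Filter.Tendsto (fun m => u m - x) Filter.atTop (nhds 0) := by
      refine squeeze_zero_norm (fun m => ?_) hmesh
      have h1 : x - u m ≤ v m - u m := by linarith [hle2 m]
      have h2 : (0:ℝ) ≤ x - u m := sub_nonneg.2 (hle1 m)
      have : ‖u m - x‖ = x - u m := by
        rw [Real.norm_eq_abs, abs_sub_comm, abs_of_nonneg h2]
      rw [this]
      exact h1.trans (hmb m)
    have := h0.add (tendsto_const_nhds (x := x))
    simpa using this
  have hv : Filter.Tendsto v Filter.atTop (nhds x) := by
    have h0 : Filter.Tendsto (fun m => v m - x) Filter.atTop (nhds 0) := by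
      refine squeeze_zero_norm (fun m => ?_) hmesh
      have h1 : v m - x ≤ v m - u m := by linarith [hle1 m]
      have h2 : (0:ℝ) ≤ v m - x := sub_nonneg.2 (hle2 m)
      have : ‖v m - x‖ = v m - x := by rw [Real.norm_eq_abs, abs_of_nonneg h2]
      rw [this]
      exact h1.trans (hmb m)
    have := h0.add (tendsto_const_nhds (x := x))
    simpa using this
  have hfu : Filter.Tendsto (fun m => f (u m)) Filter.atTop (nhds (f x)) :=
    (hcont.tendsto x).comp hu
  have hfv : Filter.Tendsto (fun m => f (v m)) Filter.atTop (nhds (f x)) :=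
    (hcont.tendsto x).comp hv
  have key : ∀ m, f x ≤ P m x ∧ P m x ≤ max (f (u m)) (f (v m)) := by
    intro m
    have hd : 0 < v m - u m := sub_pos.2 (huv m)
    set tu := (v m - x) / (v m - u m) with htu_def
    set tv := (x - u m) / (v m - u m) with htv_def
    have htu0 : 0 ≤ tu := div_nonneg (sub_nonneg.2 (hle2 m)) hd.le
    have htv0 : 0 ≤ tv := div_nonneg (sub_nonneg.2 (hle1 m)) hd.le
    have hsum : tu + tv = 1 := by
      rw [htu_def, htv_def]; field_simp; ring
    have hcomb : tu * u m + tv * v m = x := by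
      rw [htu_def, htv_def]; field_simp; ring
    have hfle : f x ≤ tu * f (u m) + tv * f (v m) := by
      have := hf.2 (Set.mem_univ (u m)) (Set.mem_univ (v m)) htu0 htv0 hsum
      simpa [smul_eq_mul, hcomb] using this
    obtain ⟨c, d, hcd⟩ := hPaff m (idx m) (hidxlt m)
    have hPx : P m x = c * x + d := hcd x ⟨hle1 m, hle2 m⟩
    have hPu : c * u m + d = f (u m) := by
      rw [← hcd (u m) ⟨le_refl _, (huv m).le⟩]
      exact hPf m (idx m) (hidxlt m).le
    have hPv : c * v m + d = f (v m) := by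
      rw [← hcd (v m) ⟨(huv m).le, le_refl _⟩]
      exact hPf m (idx m + 1) (hidxlt m)
    have hPeq : P m x = tu * f (u m) + tv * f (v m) := by
      rw [hPx, ← hPu, ← hPv]
      linear_combination (-c) * hcomb - d * hsum
    refine ⟨by rw [hPeq]; exact hfle, ?_⟩
    rw [hPeq]
    calc tu * f (u m) + tv * f (v m)
        ≤ tu * max (f (u m)) (f (v m)) + tv * max (f (u m)) (f (v m)) := by
          gcongr
          · exact le_max_left _ _
          · exact le_max_right _ _
      _ = max (f (u m)) (f (v m)) := by rw [← add_mul, hsum, one_mul]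
  have hmax : Filter.Tendsto (fun m => max (f (u m)) (f (v m))) Filter.atTop (nhds (f x)) := by
    simpa using hfu.max hfv
  exact tendsto_of_tendsto_of_tendsto_of_le_of_le tendsto_const_nhds hmax
    (fun m => (key m).1) (fun m => (key m).2)
end

section
/- Let f : ℝ → ℝ be a convex function, let a < b be real numbers, and let {π_m} be a sequence of partitions of [a,b] with mesh ‖π_m‖ → 0 as m → ∞. Let P_m be the convex linear approximation of f based on π_m. Then for every x ∈ (a,b) at which f is differentiable (equivalently, at which the left and right derivatives of f coincide), the left derivative (P_m)'_−(x) converges to f'_−(x) as m → ∞. -/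
/-- Theorem 2.3 (i), second part: if `P m` is the convex linear approximation of the convex
function `f` based on a partition `π_m` of `[a, b]` with mesh tending to `0`, then at every
point `x ∈ (a, b)` where `f` is differentiable, the left derivatives `(P m)'_−(x)`
(realized as derivatives from within `(-∞, x]`) converge to `f'_−(x)`. -/
theorem convexLinearApprox_leftDeriv_tendsto
    (f : ℝ → ℝ) (hf : ConvexOn ℝ Set.univ f)
    (a b : ℝ) (hab : a < b)
    (N : ℕ → ℕ) (hN : ∀ m, 0 < N m)
    (pts : ℕ → ℕ → ℝ)
    (hpts0 : ∀ m, pts m 0 = a) (hptsN : ∀ m, pts m (N m) = b)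
    (hmono : ∀ m, ∀ i < N m, pts m i < pts m (i + 1))
    (hmesh : Filter.Tendsto
      (fun m => ⨆ i : Fin (N m), (pts m ((i : ℕ) + 1) - pts m (i : ℕ)))
      Filter.atTop (nhds 0))
    (P : ℕ → ℝ → ℝ)
    (hPf : ∀ m, ∀ i ≤ N m, P m (pts m i) = f (pts m i))
    (hPaff : ∀ m, ∀ i < N m, ∃ c d : ℝ,
      ∀ x ∈ Set.Icc (pts m i) (pts m (i + 1)), P m x = c * x + d) :
    ∀ x ∈ Set.Ioo a b, DifferentiableAt ℝ f x →
      Filter.Tendsto (fun m => derivWithin (P m) (Set.Iic x) x) Filter.atTop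
        (nhds (derivWithin f (Set.Iic x) x)) := by
  classical
  intro x hx hdiff
  have hflip : ∀ s t : ℝ, (f s - f t) / (s - t) = (f t - f s) / (t - s) := by
    intro s t
    rw [← neg_sub (f t), ← neg_sub t, neg_div_neg_eq]
  set L := deriv f x with hL
  have hUD : UniqueDiffWithinAt ℝ (Set.Iic x) x := uniqueDiffOn_Iic x x Set.self_mem_Iic
  have hfw : derivWithin f (Set.Iic x) x = L := hdiff.derivWithin hUD
  rw [hfw]
  set ε : ℕ → ℝ := fun m => ⨆ i : Fin (N m), (pts m ((i : ℕ) + 1) - pts m (i : ℕ)) with hεdef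
  have hbdd : ∀ m, BddAbove (Set.range fun i : Fin (N m) => pts m ((i : ℕ) + 1) - pts m (i : ℕ)) :=
    fun m => (Set.finite_range _).bddAbove
  have hεge : ∀ m, ∀ i : Fin (N m), pts m ((i : ℕ) + 1) - pts m (i : ℕ) ≤ ε m :=
    fun m i => le_ciSup (hbdd m) i
  have hεpos : ∀ m, 0 < ε m := by
    intro m
    have h0 : (0 : ℝ) < pts m (0 + 1) - pts m 0 := sub_pos.2 (hmono m 0 (hN m))
    exact lt_of_lt_of_le h0 (hεge m ⟨0, hN m⟩)
  -- Identify the left derivative of `P m` at `x` as a secant slope of `f`.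
  have key : ∀ m, ∃ u v : ℝ, u < x ∧ x ≤ v ∧ u < v ∧ v - u ≤ ε m ∧
      derivWithin (P m) (Set.Iic x) x = (f v - f u) / (v - u) := by
    intro m
    have hex : ∃ j, x ≤ pts m j := ⟨N m, by rw [hptsN m]; exact hx.2.le⟩
    set j := Nat.find hex with hj
    have hjspec : x ≤ pts m j := Nat.find_spec hex
    have hjle : j ≤ N m := Nat.find_min' hex (by rw [hptsN m]; exact hx.2.le)
    have hjpos : 0 < j := by
      rcases Nat.eq_zero_or_pos j with h | h
      · exfalso
        rw [h, hpts0 m] at hjspec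
        exact absurd hjspec (not_le.2 hx.1)
      · exact h
    set i := j - 1 with hidef
    have hij : i + 1 = j := Nat.succ_pred_eq_of_pos hjpos
    have hiN : i < N m := by omega
    have hui : pts m i < x := by
      have h := Nat.find_min hex (show i < j by omega)
      exact not_le.1 h
    set u := pts m i with hudef
    set v := pts m (i + 1) with hvdef
    have hxv : x ≤ v := by rw [hvdef, hij]; exact hjspec
    have huv : u < v := hmono m i hiN
    have hvu : v - u ≤ ε m := hεge m ⟨i, hiN⟩
    obtain ⟨c, d, hcd⟩ := hPaff m i hiN
    refine ⟨u, v, hui, hxv, huv, hvu, ?_⟩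
    have hPx : P m x = c * x + d := hcd x ⟨hui.le, hxv⟩
    have hev : P m =ᶠ[nhdsWithin x (Set.Iic x)] fun y => c * y + d := by
      have h1 : Set.Ioi u ∈ nhdsWithin x (Set.Iic x) :=
        mem_nhdsWithin_of_mem_nhds (Ioi_mem_nhds hui)
      filter_upwards [h1, self_mem_nhdsWithin] with y hy1 hy2
      exact hcd y ⟨le_of_lt hy1, le_trans hy2 hxv⟩
    have hda : HasDerivAt (fun y : ℝ => c * y + d) c x := by
      simpa using ((hasDerivAt_id x).const_mul c).add_const d
    have hdw : derivWithin (P m) (Set.Iic x) x = c := by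
      rw [hev.derivWithin_eq hPx]
      exact hda.hasDerivWithinAt.derivWithin hUD
    have e1 : c * u + d = f u := (hcd u ⟨le_rfl, huv.le⟩).symm.trans (hPf m i hiN.le)
    have e2 : c * v + d = f v := (hcd v ⟨huv.le, le_rfl⟩).symm.trans (hPf m (i + 1) hiN)
    rw [hdw, eq_div_iff (sub_ne_zero.2 (ne_of_gt huv))]
    linear_combination e2 - e1
  choose u v hux hxv huv hvuε hD using key
  -- The two sandwiching slopes tend to `L`.
  have hslope : Filter.Tendsto (slope f x) (nhdsWithin x {x}ᶜ) (nhds L) :=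
    hasDerivAt_iff_tendsto_slope.1 hdiff.hasDerivAt
  have hεto : Filter.Tendsto ε Filter.atTop (nhds 0) := hmesh
  have hlo : Filter.Tendsto (fun m => slope f x (x - ε m)) Filter.atTop (nhds L) := by
    refine hslope.comp (tendsto_nhdsWithin_iff.2 ⟨?_, ?_⟩)
    · simpa using tendsto_const_nhds.sub hεto
    · exact Filter.Eventually.of_forall fun m => by
        have := hεpos m
        simp only [Set.mem_compl_iff, Set.mem_singleton_iff]
        intro h; linarith
  have hhi : Filter.Tendsto (fun m => slope f x (x + ε m)) Filter.atTop (nhds L) := by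
    refine hslope.comp (tendsto_nhdsWithin_iff.2 ⟨?_, ?_⟩)
    · simpa using tendsto_const_nhds.add hεto
    · exact Filter.Eventually.of_forall fun m => by
        have := hεpos m
        simp only [Set.mem_compl_iff, Set.mem_singleton_iff]
        intro h; nlinarith
  -- sandwich inequalities
  have hlow : ∀ m, slope f x (x - ε m) ≤ (f (v m) - f (u m)) / (v m - u m) := by
    intro m
    set p := x - ε m with hp
    have hpu : p ≤ u m := by
      have := hvuε m; have := hxv m; simp only [hp]; linarith
    have hpx : p < x := by simp only [hp]; linarith [hεpos m]
    have step1 : (f x - f p) / (x - p) ≤ (f (v m) - f p) / (v m - p) :=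
      hf.secant_mono (Set.mem_univ p) (Set.mem_univ x) (Set.mem_univ (v m))
        (ne_of_gt hpx) (ne_of_gt (lt_of_lt_of_le hpx (hxv m))) (hxv m)
    have step2 : (f p - f (v m)) / (p - v m) ≤ (f (u m) - f (v m)) / (u m - v m) :=
      hf.secant_mono (Set.mem_univ (v m)) (Set.mem_univ p) (Set.mem_univ (u m))
        (ne_of_lt (lt_of_lt_of_le hpx (hxv m))) (ne_of_lt (huv m)) hpu
    rw [hflip p (v m), hflip (u m) (v m)] at step2
    have : slope f x p = (f x - f p) / (x - p) :=
      (slope_def_field f x p).trans (hflip p x)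
    rw [this]
    exact le_trans step1 step2
  have hhigh : ∀ m, (f (v m) - f (u m)) / (v m - u m) ≤ slope f x (x + ε m) := by
    intro m
    set q := x + ε m with hq
    have hxq : x < q := by simp only [hq]; linarith [hεpos m]
    have hvq : v m ≤ q := by
      have := hvuε m; have := hux m; simp only [hq]; linarith
    have huq : u m < q := lt_trans (hux m) hxq
    have step1 : (f (v m) - f (u m)) / (v m - u m) ≤ (f q - f (u m)) / (q - u m) :=
      hf.secant_mono (Set.mem_univ (u m)) (Set.mem_univ (v m)) (Set.mem_univ q)
        (ne_of_gt (huv m)) (ne_of_gt huq) hvq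
    have step2 : (f (u m) - f q) / (u m - q) ≤ (f x - f q) / (x - q) :=
      hf.secant_mono (Set.mem_univ q) (Set.mem_univ (u m)) (Set.mem_univ x)
        (ne_of_lt huq) (ne_of_lt hxq) (hux m).le
    rw [hflip (u m) q, hflip x q] at step2
    have : slope f x q = (f q - f x) / (q - x) := slope_def_field f x q
    rw [this]
    exact le_trans step1 step2
  have hDto : Filter.Tendsto (fun m => (f (v m) - f (u m)) / (v m - u m))
      Filter.atTop (nhds L) :=
    tendsto_of_tendsto_of_tendsto_of_le_of_le hlo hhi hlow hhigh
  exact hDto.congr fun m => (hD m).symm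
end

section
/- Let f : ℝ → ℝ be a convex function, let a < b be real numbers, and assume f is affine on (−∞, a] and affine on [b, ∞). Let {π_m} be a sequence of partitions of [a,b] with mesh ‖π_m‖ → 0, and let P_m : ℝ → ℝ be the convex linear approximation of f based on π_m on [a,b], extended by f outside [a,b]. Let μ be the Stieltjes measure associated with the (monotone, right-continuous) right derivative f'_+ of f, and let μ_m be the Stieltjes measure associated with the right derivative (P_m)'_+ of P_m. Then for every bounded continuous function g : ℝ → ℝ, ∫_{[a,b]} g dμ_m → ∫_{[a,b]} g dμ as m → ∞. -/
open MeasureTheory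

section AuxiliaryLemmas
open Set Filter Topology


lemma aux_convex_hasDerivWithinAt_Ici {f : ℝ → ℝ} (hf : ConvexOn ℝ Set.univ f) (x : ℝ) :
    HasDerivWithinAt f (derivWithin f (Set.Ici x) x) (Set.Ici x) x := by
  have hmono : MonotoneOn (slope f x) (Ioi x) :=
    (hf.slope_mono (mem_univ x)).mono (fun y hy => ⟨mem_univ y, ne_of_gt hy⟩)
  have hbdd : BddBelow (slope f x '' Ioi x) := by
    refine ⟨slope f x (x - 1), ?_⟩
    rintro - ⟨y, hy, rfl⟩
    exact hf.slope_mono (mem_univ x) ⟨mem_univ _, ne_of_lt (by linarith)⟩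
      ⟨mem_univ _, ne_of_gt hy⟩ (by linarith [mem_Ioi.1 hy])
  have hT : Tendsto (slope f x) (𝓝[>] x) (𝓝 (sInf (slope f x '' Ioi x))) :=
    hmono.tendsto_nhdsGT hbdd
  have hD : HasDerivWithinAt f (sInf (slope f x '' Ioi x)) (Ici x) x := by
    rw [hasDerivWithinAt_iff_tendsto_slope, Ici_sdiff_left]
    exact hT
  rwa [hD.derivWithin (uniqueDiffOn_Ici x x self_mem_Ici)]

lemma aux_rightDeriv_le_slope {f : ℝ → ℝ} (hf : ConvexOn ℝ Set.univ f) {u v : ℝ} (huv : u < v) :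
    derivWithin f (Set.Ici u) u ≤ (f v - f u) / (v - u) := by
  have := hf.le_slope_of_hasDerivWithinAt_Ioi (mem_univ u) (mem_univ v) huv
    ((aux_convex_hasDerivWithinAt_Ici hf u).mono Ioi_subset_Ici_self)
  rwa [slope_def_field] at this

lemma aux_slope_le_rightDeriv {f : ℝ → ℝ} (hf : ConvexOn ℝ Set.univ f) {u v : ℝ} (huv : u < v) :
    (f v - f u) / (v - u) ≤ derivWithin f (Set.Ici v) v := by
  have hD : HasDerivWithinAt f (derivWithin f (Set.Ici v) v) (Ioi v) v :=
    (aux_convex_hasDerivWithinAt_Ici hf v).mono Ioi_subset_Ici_self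
  have hT := (hasDerivWithinAt_iff_tendsto_slope' (notMem_Ioi.2 le_rfl)).mp hD
  refine ge_of_tendsto hT ?_
  filter_upwards [self_mem_nhdsWithin] with t ht
  have h1 : slope f v u ≤ slope f v t :=
    hf.slope_mono (mem_univ v) ⟨mem_univ _, ne_of_lt huv⟩
      ⟨mem_univ _, ne_of_gt ht⟩ (by linarith [mem_Ioi.1 ht])
  have h2 : slope f v u = (f v - f u) / (v - u) := by
    rw [slope_comm, slope_def_field]
  linarith [h1, h2.symm.le]

lemma aux_derivWithin_Ici_affine {p : ℝ → ℝ} {t v c d : ℝ} (htv : t < v)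
    (h : ∀ y, t ≤ y → y < v → p y = c * y + d) : derivWithin p (Set.Ici t) t = c := by
  have h1 : p =ᶠ[𝓝[Set.Ici t] t] (fun y => c * y + d) := by
    filter_upwards [self_mem_nhdsWithin, mem_nhdsWithin_of_mem_nhds (Iio_mem_nhds htv)]
      with y hy1 hy2
    exact h y hy1 hy2
  have h2 : HasDerivAt (fun y => c * y + d) c t := by
    simpa using ((hasDerivAt_id t).const_mul c).add_const d
  rw [h1.derivWithin_eq (h t le_rfl htv)]
  exact h2.hasDerivWithinAt.derivWithin (uniqueDiffOn_Ici t t self_mem_Ici)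

lemma aux_abel (G D : ℕ → ℝ) (n : ℕ) :
    G 0 * D 0 + ∑ i ∈ Finset.range n, G (i+1) * (D (i+1) - D i)
      = ∑ i ∈ Finset.range n, (G i - G (i+1)) * D i + G n * D n := by
  induction n with
  | zero => simp
  | succ k ih =>
      rw [Finset.sum_range_succ, Finset.sum_range_succ, ← add_assoc, ih]
      ring

lemma aux_mono_le (x : ℕ → ℝ) (n : ℕ) (hm : ∀ i < n, x i ≤ x (i+1)) :
    ∀ i j, i ≤ j → j ≤ n → x i ≤ x j := by
  intro i j hij hjn
  induction j with
  | zero => simp_all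
  | succ k ihk =>
      rcases Nat.lt_or_ge i (k+1) with h | h
      · have : x i ≤ x k := ihk (Nat.lt_succ_iff.1 h) (le_trans (Nat.le_succ k) hjn)
        exact this.trans (hm k (Nat.lt_of_succ_le hjn))
      · have : i = k + 1 := le_antisymm hij h
        simp [this]

lemma aux_sum_integral_Ioc (ν : Measure ℝ) (g : ℝ → ℝ) (x : ℕ → ℝ) (n : ℕ)
    (hm : ∀ i < n, x i ≤ x (i+1)) (hint : IntegrableOn g (Ioc (x 0) (x n)) ν) :
    ∫ t in Ioc (x 0) (x n), g t ∂ν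
      = ∑ i ∈ Finset.range n, ∫ t in Ioc (x i) (x (i+1)), g t ∂ν := by
  induction n with
  | zero => simp
  | succ k ih =>
      have hm' : ∀ i < k, x i ≤ x (i+1) := fun i hi => hm i (hi.trans (Nat.lt_succ_self k))
      have h0k : x 0 ≤ x k := aux_mono_le x k hm' 0 k (Nat.zero_le k) le_rfl
      have hkk : x k ≤ x (k+1) := hm k (Nat.lt_succ_self k)
      have hsplit : Ioc (x 0) (x k) ∪ Ioc (x k) (x (k+1)) = Ioc (x 0) (x (k+1)) :=
        Set.Ioc_union_Ioc_eq_Ioc h0k hkk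
      rw [Finset.sum_range_succ, ← ih hm' (hint.mono_set (by rw [← hsplit]; exact subset_union_left)),
        ← setIntegral_union (Set.Ioc_disjoint_Ioc_of_le le_rfl) measurableSet_Ioc
          (hint.mono_set (by rw [← hsplit]; exact subset_union_left))
          (hint.mono_set (by rw [← hsplit]; exact subset_union_right)), hsplit]

lemma aux_abel2 (gg Gs Fs : ℕ → ℝ) (n : ℕ) :
    (Gs 0 - Fs 0) * gg 0
      + ∑ i ∈ Finset.range n,
          ((Gs (i+1) - Gs i) * gg (i+1) - (Fs (i+1) - Fs i) * gg (i+1))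
      = ∑ i ∈ Finset.range n, (gg i - gg (i+1)) * (Gs i - Fs i)
        + (Gs n - Fs n) * gg n := by
  induction n with
  | zero => ring
  | succ k ih =>
      rw [Finset.sum_range_succ, Finset.sum_range_succ, ← add_assoc, ih]
      ring

lemma aux_key (f : ℝ → ℝ) (hf : ConvexOn ℝ Set.univ f)
    (a b : ℝ) (hab : a < b)
    (cL dL : ℝ) (haffL : ∀ y ≤ a, f y = cL * y + dL)
    (cR dR : ℝ) (haffR : ∀ y, b ≤ y → f y = cR * y + dR)
    (n : ℕ) (hn : 0 < n) (x : ℕ → ℝ) (hx0 : x 0 = a) (hxn : x n = b)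
    (hm : ∀ i < n, x i < x (i+1))
    (P : ℝ → ℝ) (hPf : ∀ i ≤ n, P (x i) = f (x i))
    (hPaff : ∀ i < n, ∃ c d : ℝ, ∀ y ∈ Set.Icc (x i) (x (i+1)), P y = c * y + d)
    (hPout : ∀ y, y ∉ Set.Icc a b → P y = f y)
    (F : StieltjesFunction ℝ) (hF : ∀ t, F t = derivWithin f (Set.Ici t) t)
    (G : StieltjesFunction ℝ) (hG : ∀ t, G t = derivWithin P (Set.Ici t) t)
    (g : ℝ → ℝ) (hg : Continuous g)
    (ε δ : ℝ) (hδ : 0 < δ) (hε : 0 ≤ ε)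
    (hmod : ∀ u ∈ Set.Icc a b, ∀ v ∈ Set.Icc a b, |u - v| ≤ δ → |g u - g v| ≤ ε)
    (hmesh : ∀ i < n, x (i+1) - x i ≤ δ) :
    |(∫ t in Set.Icc a b, g t ∂G.measure) - ∫ t in Set.Icc a b, g t ∂F.measure|
      ≤ ε * (2 * (F b - F a)) := by
  have hmle : ∀ i < n, x i ≤ x (i+1) := fun i hi => (hm i hi).le
  have hxmem : ∀ i ≤ n, x i ∈ Set.Icc a b := by
    intro i hi
    constructor
    · rw [← hx0]; exact aux_mono_le x n hmle 0 i (Nat.zero_le i) hi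
    · rw [← hxn]; exact aux_mono_le x n hmle i n hi le_rfl
  -- values of F
  have hFb : F b = cR := by
    rw [hF]
    exact aux_derivWithin_Ici_affine (lt_add_one b) (fun y hy _ => haffR y hy)
  have hFlt : ∀ t, t < a → F t = cL := by
    intro t ht
    rw [hF]
    exact aux_derivWithin_Ici_affine ht (fun y hy hyv => haffL y hyv.le)
  -- values of G
  have hGb : G b = cR := by
    rw [hG]
    refine aux_derivWithin_Ici_affine (c := cR) (d := dR) (lt_add_one b) (fun y hy _ => ?_)
    rcases eq_or_lt_of_le hy with heq | h
    · rw [← heq, ← hxn, hPf n le_rfl, hxn]; exact haffR b le_rfl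
    · rw [hPout y (fun hc => absurd hc.2 (not_le.2 h)), haffR y hy]
  have hGlt : ∀ t, t < a → G t = cL := by
    intro t ht
    rw [hG]
    refine aux_derivWithin_Ici_affine (c := cL) (d := dL) ht (fun y hy hyv => ?_)
    rw [hPout y (fun hc => absurd hc.1 (not_le.2 hyv)), haffL y hyv.le]
  have hGstep : ∀ i < n, ∀ t, x i ≤ t → t < x (i+1) →
      G t = (f (x (i+1)) - f (x i)) / (x (i+1) - x i) := by
    intro i hi t ht1 ht2
    obtain ⟨c, d, hcd⟩ := hPaff i hi
    have hGt : G t = c := by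
      rw [hG]
      exact aux_derivWithin_Ici_affine ht2
        (fun y hy1 hy2 => hcd y ⟨ht1.trans hy1, hy2.le⟩)
    have e1 : c * x i + d = f (x i) := by
      rw [← hcd (x i) ⟨le_rfl, (hm i hi).le⟩]; exact hPf i hi.le
    have e2 : c * x (i+1) + d = f (x (i+1)) := by
      rw [← hcd (x (i+1)) ⟨(hm i hi).le, le_rfl⟩]; exact hPf (i+1) hi
    have hne : x (i+1) - x i ≠ 0 := ne_of_gt (by linarith [hm i hi])
    rw [hGt]
    field_simp
    linear_combination e2 - e1
  have hGxi : ∀ i < n, G (x i) = (f (x (i+1)) - f (x i)) / (x (i+1) - x i) :=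
    fun i hi => hGstep i hi (x i) le_rfl (hm i hi)
  -- D bounds
  have hD1 : ∀ i < n, F (x i) ≤ G (x i) := by
    intro i hi
    rw [hGxi i hi, hF]
    exact aux_rightDeriv_le_slope hf (hm i hi)
  have hD2 : ∀ i < n, G (x i) ≤ F (x (i+1)) := by
    intro i hi
    rw [hGxi i hi, hF]
    exact aux_slope_le_rightDeriv hf (hm i hi)
  have hDn : G (x n) = F (x n) := by rw [hxn, hGb, hFb]
  -- left limits
  have hneBot : ∀ t : ℝ, (nhdsWithin t (Set.Iio t)) ≠ ⊥ :=
    fun t => (inferInstance : Filter.NeBot (nhdsWithin t (Set.Iio t))).ne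
  have hlGa : Function.leftLim (G : ℝ → ℝ) a = cL := by
    refine leftLim_eq_of_tendsto ?_
    refine Filter.Tendsto.congr' ?_ (tendsto_const_nhds (x := cL))
    filter_upwards [self_mem_nhdsWithin] with t ht
    exact (hGlt t ht).symm
  have hlFa : Function.leftLim (F : ℝ → ℝ) a = cL := by
    refine leftLim_eq_of_tendsto ?_
    refine Filter.Tendsto.congr' ?_ (tendsto_const_nhds (x := cL))
    filter_upwards [self_mem_nhdsWithin] with t ht
    exact (hFlt t ht).symm
  have hlGx : ∀ i < n, Function.leftLim (G : ℝ → ℝ) (x (i+1)) = G (x i) := by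
    intro i hi
    refine leftLim_eq_of_tendsto ?_
    refine Filter.Tendsto.congr' ?_ (tendsto_const_nhds (x := G (x i)))
    filter_upwards [Ioo_mem_nhdsLT_of_mem (Set.mem_Ioc.2 ⟨hm i hi, le_rfl⟩)] with t ht
    rw [hGstep i hi t ht.1.le ht.2, hGxi i hi]
  -- measure values
  have hμGa : G.measure {a} = ENNReal.ofReal (G a - cL) := by
    rw [G.measure_singleton, hlGa]
  have hμGx : ∀ i < n, G.measure {x (i+1)} = ENNReal.ofReal (G (x (i+1)) - G (x i)) := by
    intro i hi; rw [G.measure_singleton, hlGx i hi]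
  have hμGoo : ∀ i < n, G.measure (Set.Ioo (x i) (x (i+1))) = 0 := by
    intro i hi; rw [G.measure_Ioo, hlGx i hi]; simp
  have hμFa : F.measure {a} = ENNReal.ofReal (F a - cL) := by
    rw [F.measure_singleton, hlFa]
  -- integrability
  have hintG : IntegrableOn g (Set.Icc a b) G.measure := hg.integrableOn_Icc
  have hintF : IntegrableOn g (Set.Icc a b) F.measure := hg.integrableOn_Icc
  -- decomposition
  have hIccU : {a} ∪ Set.Ioc a b = Set.Icc a b := by
    rw [Set.union_comm]; exact Set.Ioc_union_left hab.le
  have hdecomp : ∀ ν : Measure ℝ, IntegrableOn g (Set.Icc a b) ν →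
      ∫ t in Set.Icc a b, g t ∂ν
        = (∫ t in ({a} : Set ℝ), g t ∂ν)
          + ∑ i ∈ Finset.range n, ∫ t in Set.Ioc (x i) (x (i+1)), g t ∂ν := by
    intro ν hint
    have h2 := aux_sum_integral_Ioc ν g x n hmle
      (by rw [hx0, hxn]; exact hint.mono_set Set.Ioc_subset_Icc_self)
    rw [hx0, hxn] at h2
    rw [← hIccU] at hint ⊢
    rw [setIntegral_union (by simp) measurableSet_Ioc
      (hint.mono_set Set.subset_union_left) (hint.mono_set Set.subset_union_right), h2]
  -- computation of the G-integral
  have hIoc : ∀ i < n, ∫ t in Set.Ioc (x i) (x (i+1)), g t ∂G.measure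
      = (G (x (i+1)) - G (x i)) * g (x (i+1)) := by
    intro i hi
    have hsub : Set.Ioc (x i) (x (i+1)) ⊆ Set.Icc a b :=
      (Set.Ioc_subset_Icc_self).trans (Set.Icc_subset_Icc (hxmem i hi.le).1 (hxmem (i+1) hi).2)
    have hint1 : IntegrableOn g (Set.Ioo (x i) (x (i+1))) G.measure :=
      hintG.mono_set (Set.Ioo_subset_Ioc_self.trans hsub)
    have hint2 : IntegrableOn g ({x (i+1)} : Set ℝ) G.measure :=
      hintG.mono_set (Set.singleton_subset_iff.2 (hxmem (i+1) hi))
    have h0 : ∫ t in Set.Ioo (x i) (x (i+1)), g t ∂G.measure = 0 := by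
      rw [Measure.restrict_eq_zero.mpr (hμGoo i hi)]
      exact integral_zero_measure _
    rw [← Set.Ioo_union_right (hm i hi),
      setIntegral_union (by simp) (measurableSet_singleton _) hint1 hint2,
      h0, integral_singleton, measureReal_def, hμGx i hi,
      ENNReal.toReal_ofReal (sub_nonneg.2 (G.mono (hm i hi).le)), smul_eq_mul, zero_add]
  have hIG : ∫ t in Set.Icc a b, g t ∂G.measure
      = (G a - cL) * g a
        + ∑ i ∈ Finset.range n, (G (x (i+1)) - G (x i)) * g (x (i+1)) := by
    rw [hdecomp G.measure hintG, integral_singleton, measureReal_def, hμGa,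
      ENNReal.toReal_ofReal (by rw [← hlGa]; exact sub_nonneg.2 (G.mono.leftLim_le le_rfl)), smul_eq_mul]
    congr 1
    exact Finset.sum_congr rfl (fun i hi => hIoc i (Finset.mem_range.1 hi))
  have hIF : ∫ t in Set.Icc a b, g t ∂F.measure
      = (F a - cL) * g a
        + ∑ i ∈ Finset.range n, ∫ t in Set.Ioc (x i) (x (i+1)), g t ∂F.measure := by
    rw [hdecomp F.measure hintF, integral_singleton, measureReal_def, hμFa,
      ENNReal.toReal_ofReal (by rw [← hlFa]; exact sub_nonneg.2 (F.mono.leftLim_le le_rfl)), smul_eq_mul]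
  -- error per interval for F
  have hE : ∀ i < n,
      |(F (x (i+1)) - F (x i)) * g (x (i+1))
        - ∫ t in Set.Ioc (x i) (x (i+1)), g t ∂F.measure|
      ≤ ε * (F (x (i+1)) - F (x i)) := by
    intro i hi
    have hsub : Set.Ioc (x i) (x (i+1)) ⊆ Set.Icc a b :=
      (Set.Ioc_subset_Icc_self).trans (Set.Icc_subset_Icc (hxmem i hi.le).1 (hxmem (i+1) hi).2)
    have hFi : (F.measure (Set.Ioc (x i) (x (i+1)))).toReal = F (x (i+1)) - F (x i) := by
      rw [F.measure_Ioc, ENNReal.toReal_ofReal (sub_nonneg.2 (F.mono (hm i hi).le))]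
    have hlt : F.measure (Set.Ioc (x i) (x (i+1))) < ⊤ := by
      rw [F.measure_Ioc]; exact ENNReal.ofReal_lt_top
    have hconst : (F (x (i+1)) - F (x i)) * g (x (i+1))
        = ∫ t in Set.Ioc (x i) (x (i+1)), g (x (i+1)) ∂F.measure := by
      rw [setIntegral_const, measureReal_def, hFi, smul_eq_mul]
    have hintsub : IntegrableOn g (Set.Ioc (x i) (x (i+1))) F.measure := hintF.mono_set hsub
    rw [hconst, ← integral_sub (integrableOn_const (C := g (x (i+1))) hlt.ne) hintsub]
    have hnorm : ‖∫ t in Set.Ioc (x i) (x (i+1)), (g (x (i+1)) - g t) ∂F.measure‖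
        ≤ ε * (F.measure (Set.Ioc (x i) (x (i+1)))).toReal := by
      refine norm_setIntegral_le_of_norm_le_const hlt ?_
      intro t ht
      rw [Real.norm_eq_abs]
      refine hmod (x (i+1)) (hxmem (i+1) hi) t (hsub ht) ?_
      rw [abs_of_nonneg (by linarith [ht.2])]
      linarith [ht.1, hmesh i hi]
    rw [Real.norm_eq_abs, hFi] at hnorm
    exact hnorm
  -- Abel rearrangement
  -- Abel rearrangement
  have habel := aux_abel2 (fun i => g (x i)) (fun i => G (x i)) (fun i => F (x i)) n
  have hsum : (∫ t in Set.Icc a b, g t ∂G.measure) - ∫ t in Set.Icc a b, g t ∂F.measure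
      = (∑ i ∈ Finset.range n, (g (x i) - g (x (i+1))) * (G (x i) - F (x i)))
        + ∑ i ∈ Finset.range n,
            ((F (x (i+1)) - F (x i)) * g (x (i+1))
              - ∫ t in Set.Ioc (x i) (x (i+1)), g t ∂F.measure) := by
    rw [hIG, hIF, ← hx0]
    rw [Finset.sum_sub_distrib (f := fun i => (F (x (i+1)) - F (x i)) * g (x (i+1)))]
    have hmerge : (∑ i ∈ Finset.range n, (G (x (i+1)) - G (x i)) * g (x (i+1)))
        - ∑ i ∈ Finset.range n, (F (x (i+1)) - F (x i)) * g (x (i+1))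
        = ∑ i ∈ Finset.range n,
            ((G (x (i+1)) - G (x i)) * g (x (i+1))
              - (F (x (i+1)) - F (x i)) * g (x (i+1))) := (Finset.sum_sub_distrib _ _).symm
    have hDn0 : (G (x n) - F (x n)) * g (x n) = 0 := by rw [hDn]; ring
    rw [hDn0] at habel
    linarith [habel, hmerge]
  -- final bound
  have hAbound : |∑ i ∈ Finset.range n, (g (x i) - g (x (i+1))) * (G (x i) - F (x i))|
      ≤ ε * (F b - F a) := by
    calc |∑ i ∈ Finset.range n, (g (x i) - g (x (i+1))) * (G (x i) - F (x i))|
        ≤ ∑ i ∈ Finset.range n, |(g (x i) - g (x (i+1))) * (G (x i) - F (x i))| :=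
          Finset.abs_sum_le_sum_abs _ _
      _ ≤ ∑ i ∈ Finset.range n, ε * (F (x (i+1)) - F (x i)) := by
          refine Finset.sum_le_sum (fun i hi => ?_)
          have hi' := Finset.mem_range.1 hi
          rw [abs_mul]
          have h1 : |g (x i) - g (x (i+1))| ≤ ε := by
            refine hmod (x i) (hxmem i hi'.le) (x (i+1)) (hxmem (i+1) hi') ?_
            rw [abs_of_nonpos (by linarith [hm i hi'])]
            linarith [hmesh i hi']
          have h2 : |G (x i) - F (x i)| ≤ F (x (i+1)) - F (x i) := by
            rw [abs_of_nonneg (sub_nonneg.2 (hD1 i hi'))]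
            linarith [hD2 i hi']
          exact mul_le_mul h1 h2 (abs_nonneg _) hε
      _ = ε * ∑ i ∈ Finset.range n, (F (x (i+1)) - F (x i)) := by rw [Finset.mul_sum]
      _ = ε * (F b - F a) := by
          rw [Finset.sum_range_sub (fun i => F (x i)), hx0, hxn]
  have hEbound : |∑ i ∈ Finset.range n,
      ((F (x (i+1)) - F (x i)) * g (x (i+1))
        - ∫ t in Set.Ioc (x i) (x (i+1)), g t ∂F.measure)|
      ≤ ε * (F b - F a) := by
    calc |∑ i ∈ Finset.range n,
        ((F (x (i+1)) - F (x i)) * g (x (i+1))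
          - ∫ t in Set.Ioc (x i) (x (i+1)), g t ∂F.measure)|
        ≤ ∑ i ∈ Finset.range n, |(F (x (i+1)) - F (x i)) * g (x (i+1))
            - ∫ t in Set.Ioc (x i) (x (i+1)), g t ∂F.measure| :=
          Finset.abs_sum_le_sum_abs _ _
      _ ≤ ∑ i ∈ Finset.range n, ε * (F (x (i+1)) - F (x i)) :=
          Finset.sum_le_sum (fun i hi => hE i (Finset.mem_range.1 hi))
      _ = ε * ∑ i ∈ Finset.range n, (F (x (i+1)) - F (x i)) := by rw [Finset.mul_sum]
      _ = ε * (F b - F a) := by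
          rw [Finset.sum_range_sub (fun i => F (x i)), hx0, hxn]
  rw [hsum]
  calc |(∑ i ∈ Finset.range n, (g (x i) - g (x (i+1))) * (G (x i) - F (x i)))
      + ∑ i ∈ Finset.range n,
          ((F (x (i+1)) - F (x i)) * g (x (i+1))
            - ∫ t in Set.Ioc (x i) (x (i+1)), g t ∂F.measure)|
      ≤ ε * (F b - F a) + ε * (F b - F a) := (abs_add_le _ _).trans (add_le_add hAbound hEbound)
    _ = ε * (2 * (F b - F a)) := by ring

end AuxiliaryLemmas

/-- Theorem 2.3 (ii): let `f` be convex on `ℝ` and affine on `(-∞, a]` and on `[b, ∞)`,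
let `P m` be the convex linear approximation of `f` on `[a, b]` based on partitions with
mesh tending to `0`, extended by `f` outside `[a, b]`.  If `F` (resp. `Fm m`) is the
Stieltjes function given by the right derivative of `f` (resp. of `P m`), whose associated
Lebesgue–Stieltjes measure is the distributional second derivative, then for every bounded
continuous `g : ℝ → ℝ`,
`∫_{[a,b]} g d(μ_m) → ∫_{[a,b]} g dμ` as `m → ∞`. -/
theorem convexLinearApprox_secondDeriv_measure_tendsto
    (f : ℝ → ℝ) (hf : ConvexOn ℝ Set.univ f)
    (a b : ℝ) (hab : a < b)
    (haffL : ∃ c d : ℝ, ∀ x ≤ a, f x = c * x + d)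
    (haffR : ∃ c d : ℝ, ∀ x, b ≤ x → f x = c * x + d)
    (N : ℕ → ℕ) (hN : ∀ m, 0 < N m)
    (pts : ℕ → ℕ → ℝ)
    (hpts0 : ∀ m, pts m 0 = a) (hptsN : ∀ m, pts m (N m) = b)
    (hmono : ∀ m, ∀ i < N m, pts m i < pts m (i + 1))
    (hmesh : Filter.Tendsto
      (fun m => ⨆ i : Fin (N m), (pts m ((i : ℕ) + 1) - pts m (i : ℕ)))
      Filter.atTop (nhds 0))
    (P : ℕ → ℝ → ℝ)
    (hPf : ∀ m, ∀ i ≤ N m, P m (pts m i) = f (pts m i))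
    (hPaff : ∀ m, ∀ i < N m, ∃ c d : ℝ,
      ∀ x ∈ Set.Icc (pts m i) (pts m (i + 1)), P m x = c * x + d)
    (hPout : ∀ m, ∀ x, x ∉ Set.Icc a b → P m x = f x)
    (F : StieltjesFunction ℝ) (hF : ∀ x, F x = derivWithin f (Set.Ici x) x)
    (Fm : ℕ → StieltjesFunction ℝ) (hFm : ∀ m x, Fm m x = derivWithin (P m) (Set.Ici x) x)
    (g : ℝ → ℝ) (hg : Continuous g) (hgb : ∃ C, ∀ x, |g x| ≤ C) :
    Filter.Tendsto (fun m => ∫ x in Set.Icc a b, g x ∂(Fm m).measure)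
      Filter.atTop (nhds (∫ x in Set.Icc a b, g x ∂F.measure)) := by
  obtain ⟨cL, dL, haffL⟩ := haffL
  obtain ⟨cR, dR, haffR⟩ := haffR
  rw [Metric.tendsto_atTop]
  intro ε0 hε0
  have hBnn : (0:ℝ) ≤ F b - F a := sub_nonneg.2 (F.mono hab.le)
  have hεpos : 0 < ε0 / (4 * ((F b - F a) + 1)) := by positivity
  have huc : UniformContinuousOn g (Set.Icc a b) :=
    isCompact_Icc.uniformContinuousOn_of_continuous hg.continuousOn
  rw [Metric.uniformContinuousOn_iff] at huc
  obtain ⟨δ, hδpos, hδ⟩ := huc _ hεpos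
  have hev : ∀ᶠ m in Filter.atTop,
      (⨆ i : Fin (N m), (pts m ((i : ℕ) + 1) - pts m (i : ℕ))) < δ / 2 :=
    hmesh.eventually (eventually_lt_nhds (by positivity))
  obtain ⟨M, hM⟩ := Filter.eventually_atTop.1 hev
  refine ⟨M, fun m hm' => ?_⟩
  have hmeshm : ∀ i < N m, pts m (i+1) - pts m i ≤ δ / 2 := by
    intro i hi
    have hbdd : BddAbove (Set.range fun j : Fin (N m) =>
        pts m ((j : ℕ) + 1) - pts m (j : ℕ)) :=
      Set.Finite.bddAbove (Set.finite_range _)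
    have hle := le_ciSup hbdd (⟨i, hi⟩ : Fin (N m))
    simp only at hle
    linarith [hM m hm']
  have hmod : ∀ u ∈ Set.Icc a b, ∀ v ∈ Set.Icc a b, |u - v| ≤ δ / 2 →
      |g u - g v| ≤ ε0 / (4 * ((F b - F a) + 1)) := by
    intro u hu v hv huv
    have h := hδ u hu v hv (by rw [Real.dist_eq]; linarith)
    rw [Real.dist_eq] at h
    exact h.le
  have hkey := aux_key f hf a b hab cL dL haffL cR dR haffR (N m) (hN m) (pts m)
    (hpts0 m) (hptsN m) (hmono m) (P m) (hPf m) (hPaff m) (hPout m) F hF (Fm m) (hFm m)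
    g hg (ε0 / (4 * ((F b - F a) + 1))) (δ / 2) (by positivity) hεpos.le hmod hmeshm
  rw [Real.dist_eq]
  refine lt_of_le_of_lt hkey ?_
  rw [div_mul_eq_mul_div, div_lt_iff₀ (by positivity)]
  nlinarith [hε0, hBnn]
end
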